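/- Let ω ∈ ℂ be a primitive cube root of unity. There is no point p of the quadric Q = {[x₀:x₁:x₂:x₃:x₄] ∈ ℙ⁴(ℂ) : 2x₂² = x₁x₃ − x₀x₄} with τ(p) = p and σ(p) = p; that is, the group G = ⟨τ, σ⟩ has no fixed point on Q. -/
import Mathlib


noncomputable section

/-- Projective 4-space over ℂ. -/
abbrev P4 := Projectivization ℂ (Fin 5 → ℂ)

/-- The quadric threefold Q = {2x₂² = x₁x₃ − x₀x₄} ⊂ ℙ⁴ (the condition is invariant under
scaling of homogeneous coordinates, so testing it on `p.rep` is well defined). -/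
def quadricQ4 : Set P4 :=
  {p : P4 | 2 * p.rep 2 ^ 2 = p.rep 1 * p.rep 3 - p.rep 0 * p.rep 4}

/-- A diagonal linear automorphism of ℂⁿ. -/
def diagEquiv {n : ℕ} (d : Fin n → ℂ) (hd : ∀ i, d i ≠ 0) : (Fin n → ℂ) ≃ₗ[ℂ] (Fin n → ℂ) :=
  LinearEquiv.piCongrRight fun i => LinearEquiv.smulOfNeZero ℂ ℂ (d i) (hd i)

/-- The linear automorphism of ℂ⁵ inducing τ : [x₀:x₁:x₂:x₃:x₄] ↦ [x₄:x₃:x₂:x₁:x₀]. -/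
def tauEquiv4 : (Fin 5 → ℂ) ≃ₗ[ℂ] (Fin 5 → ℂ) :=
  LinearEquiv.funCongrLeft ℂ ℂ (Equiv.subLeft (4 : Fin 5))

/-- The projective involution τ of ℙ⁴. -/
def tauP4 : P4 → P4 := Projectivization.map tauEquiv4.toLinearMap tauEquiv4.injective

/-- The linear automorphism of ℂ⁵ inducing
σ : [x₀:x₁:x₂:x₃:x₄] ↦ [x₀:ω²x₁:ωx₂:x₃:ω²x₄], for ω ≠ 0. -/
def sigmaEquiv4 (ω : ℂ) (hω : ω ≠ 0) : (Fin 5 → ℂ) ≃ₗ[ℂ] (Fin 5 → ℂ) :=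
  diagEquiv ![1, ω ^ 2, ω, 1, ω ^ 2]
    (by intro i; fin_cases i <;> simp [hω])

/-- The projective automorphism σ of ℙ⁴. -/
def sigmaP4 (ω : ℂ) (hω : ω ≠ 0) : P4 → P4 :=
  Projectivization.map (sigmaEquiv4 ω hω).toLinearMap (sigmaEquiv4 ω hω).injective

/-- for ω a primitive cube root of unity, the group G = ⟨τ, σ⟩ has no fixed
point on the quadric Q = {2x₂² = x₁x₃ − x₀x₄} ⊂ ℙ⁴. -/
theorem stmt12 (ω : ℂ) (hω : IsPrimitiveRoot ω 3) :
    ¬ ∃ p : P4, p ∈ quadricQ4 ∧ tauP4 p = p ∧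
      sigmaP4 ω (hω.ne_zero (by norm_num)) p = p := by
  rintro ⟨p, hQ, hτ, hσ⟩
  have hω0 : ω ≠ 0 := hω.ne_zero (by norm_num)
  have hω3 : ω ^ 3 = 1 := hω.pow_eq_one
  have hω1 : ω ≠ 1 := hω.ne_one (by norm_num)
  have hω21 : ω ^ 2 ≠ 1 := by
    intro h
    apply hω1
    have h2 : ω * ω ^ 2 = ω ^ 3 := by ring
    rw [h, hω3, mul_one] at h2
    exact h2
  have hω2ω : ω ^ 2 ≠ ω := fun h =>
    hω1 (mul_left_cancel₀ hω0 (by rw [mul_one, ← sq]; exact h))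
  set v := p.rep with hvdef
  have hv : v ≠ 0 := p.rep_nonzero
  have hmk : Projectivization.mk ℂ v hv = p := p.mk_rep
  rw [← hmk] at hτ hσ
  rw [tauP4, Projectivization.map_mk, Projectivization.mk_eq_mk_iff] at hτ
  rw [sigmaP4, Projectivization.map_mk, Projectivization.mk_eq_mk_iff] at hσ
  obtain ⟨c, hc⟩ := hτ
  obtain ⟨d, hd⟩ := hσ
  have hτi : ∀ i : Fin 5, (c : ℂ) * v i = v (4 - i) := fun i => congrFun hc i
  have hσi : ∀ i : Fin 5, (d : ℂ) * v i = ![1, ω ^ 2, ω, 1, ω ^ 2] i * v i :=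
    fun i => congrFun hd i
  have hc0 : (c : ℂ) ≠ 0 := c.ne_zero
  have hQ' : 2 * v 2 ^ 2 = v 1 * v 3 - v 0 * v 4 := hQ
  have e0 : (d : ℂ) * v 0 = 1 * v 0 := hσi 0
  have e1 : (d : ℂ) * v 1 = ω ^ 2 * v 1 := hσi 1
  have e2 : (d : ℂ) * v 2 = ω * v 2 := hσi 2
  have e3 : (d : ℂ) * v 3 = 1 * v 3 := hσi 3
  have e4 : (d : ℂ) * v 4 = ω ^ 2 * v 4 := hσi 4
  have t0 : (c : ℂ) * v 0 = v 4 := hτi 0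
  have t1 : (c : ℂ) * v 1 = v 3 := hτi 1
  have t3 : (c : ℂ) * v 3 = v 1 := hτi 3
  have t4 : (c : ℂ) * v 4 = v 0 := hτi 4
  -- v 2 = 0
  have h2 : v 2 = 0 := by
    by_contra h2
    have hdω : (d : ℂ) = ω := mul_right_cancel₀ h2 e2
    have h0 : v 0 = 0 := by
      have e : (ω - 1) * v 0 = 0 := by rw [hdω] at e0; linear_combination e0
      rcases mul_eq_zero.mp e with h | h
      · exact absurd (sub_eq_zero.mp h) hω1
      · exact h
    have h3 : v 3 = 0 := by
      have e : (ω - 1) * v 3 = 0 := by rw [hdω] at e3; linear_combination e3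
      rcases mul_eq_zero.mp e with h | h
      · exact absurd (sub_eq_zero.mp h) hω1
      · exact h
    have h1 : v 1 = 0 := by
      have e : (ω ^ 2 - ω) * v 1 = 0 := by rw [hdω] at e1; linear_combination -e1
      rcases mul_eq_zero.mp e with h | h
      · exact absurd (sub_eq_zero.mp h) hω2ω
      · exact h
    have h4 : v 4 = 0 := by
      have e : (ω ^ 2 - ω) * v 4 = 0 := by rw [hdω] at e4; linear_combination -e4
      rcases mul_eq_zero.mp e with h | h
      · exact absurd (sub_eq_zero.mp h) hω2ω
      · exact h
    rw [h0, h1, h3, h4] at hQ'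
    simp at hQ'
    exact h2 hQ'
  -- v 0 = 0
  have h0 : v 0 = 0 := by
    by_contra h0
    have hd1 : (d : ℂ) = 1 := mul_right_cancel₀ h0 e0
    have h4 : v 4 = 0 := by
      have e : (ω ^ 2 - 1) * v 4 = 0 := by rw [hd1] at e4; linear_combination -e4
      rcases mul_eq_zero.mp e with h | h
      · exact absurd (sub_eq_zero.mp h) hω21
      · exact h
    rw [h4] at t0
    rcases mul_eq_zero.mp t0 with h | h
    · exact hc0 h
    · exact h0 h
  have h4 : v 4 = 0 := by
    rw [h0] at t4
    rcases mul_eq_zero.mp t4 with h | h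
    · exact absurd h hc0
    · exact h
  -- v 1 = 0
  have h1 : v 1 = 0 := by
    by_contra h1
    have hdω2 : (d : ℂ) = ω ^ 2 := mul_right_cancel₀ h1 e1
    have h3 : v 3 = 0 := by
      have e : (ω ^ 2 - 1) * v 3 = 0 := by rw [hdω2] at e3; linear_combination e3
      rcases mul_eq_zero.mp e with h | h
      · exact absurd (sub_eq_zero.mp h) hω21
      · exact h
    rw [h3, mul_zero] at t3
    exact h1 t3.symm
  have h3 : v 3 = 0 := by
    rw [h1, mul_zero] at t1
    exact t1.symm
  apply hv
  funext i
  fin_cases i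
  exacts [h0, h1, h2, h3, h4]
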